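/- Let Γ be an additive subgroup of ℂ^k, H a Hermitian form on ℂ^k with Im H(γ,γ') ∈ ℤ for all γ,γ' ∈ Γ, and α : Γ → ℂ a semicharacter for H, i.e. |α(γ)| = 1 and α(γ₁+γ₂) = α(γ₁)·α(γ₂)·(−1)^{Im H(γ₁,γ₂)} for all γ₁,γ₂ ∈ Γ. Let φ̄ : ℂ^k → ℂ^k be ℂ-linear with φ̄(Γ) ⊆ Γ and let τ ∈ ℂ^k. Define H_φ(w,w') := H(φ̄w, φ̄w') and α_φ(γ) := α(φ̄γ)·exp(2πi·Im H(φ̄γ, τ)). Then (H_φ, α_φ) is again a type: H_φ is a Hermitian form with Im H_φ(γ,γ') ∈ ℤ for all γ,γ' ∈ Γ, every α_φ(γ) has modulus one, and α_φ(γ₁+γ₂) = α_φ(γ₁)·α_φ(γ₂)·(−1)^{Im H_φ(γ₁,γ₂)} for all γ₁,γ₂ ∈ Γ. -/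

import Mathlib

open Complex

/-- If `(H, α)` is a type for the lattice `Γ` and `φ = φ̄ + τ` is an
affine endomorphism with linear part `φ̄` preserving `Γ`, then
`(H_φ, α_φ)` with `H_φ(w,w') = H(φ̄w, φ̄w')` and
`α_φ(γ) = α(φ̄γ)·exp(2πi·Im H(φ̄γ, τ))` is again a type. -/
theorem type_pullback_is_type
    (k : ℕ) (Γ : AddSubgroup (Fin k → ℂ))
    (H : (Fin k → ℂ) → (Fin k → ℂ) → ℂ)
    -- `H` is a Hermitian form: additive and ℂ-linear in the second variable,
    -- conjugate-symmetric
    (Hadd : ∀ w w₁ w₂, H w (w₁ + w₂) = H w w₁ + H w w₂)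
    (Hsmul : ∀ (c : ℂ) w w', H w (c • w') = c * H w w')
    (Hconj : ∀ w w', H w' w = starRingEnd ℂ (H w w'))
    -- `Im H` is integral on `Γ`
    (Hint : ∀ γ ∈ Γ, ∀ γ' ∈ Γ, ∃ n : ℤ, (H γ γ').im = (n : ℝ))
    -- `α` is a semicharacter for `H`
    (α : (Fin k → ℂ) → ℂ)
    (hα1 : ∀ γ ∈ Γ, ‖α γ‖ = 1)
    (hα2 : ∀ γ₁ ∈ Γ, ∀ γ₂ ∈ Γ, ∀ n : ℤ, (H γ₁ γ₂).im = (n : ℝ) →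
      α (γ₁ + γ₂) = α γ₁ * α γ₂ * (-1 : ℂ) ^ n)
    -- the affine map `φ = φ̄ + τ`, with `φ̄(Γ) ⊆ Γ`
    (φ : (Fin k → ℂ) →ₗ[ℂ] (Fin k → ℂ))
    (hφΓ : ∀ γ ∈ Γ, φ γ ∈ Γ)
    (τ : Fin k → ℂ) :
    -- `H_φ` is additive in the second variable
    (∀ w w₁ w₂, H (φ w) (φ (w₁ + w₂)) = H (φ w) (φ w₁) + H (φ w) (φ w₂)) ∧
    -- `H_φ` is ℂ-linear in the second variable
    (∀ (c : ℂ) w w', H (φ w) (φ (c • w')) = c * H (φ w) (φ w')) ∧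
    -- `H_φ` is conjugate-symmetric
    (∀ w w', H (φ w') (φ w) = starRingEnd ℂ (H (φ w) (φ w'))) ∧
    -- `Im H_φ` is integral on `Γ`
    (∀ γ ∈ Γ, ∀ γ' ∈ Γ, ∃ n : ℤ, (H (φ γ) (φ γ')).im = (n : ℝ)) ∧
    -- `α_φ` has modulus one on `Γ`
    (∀ γ ∈ Γ,
      ‖α (φ γ) * Complex.exp (2 * (Real.pi : ℂ) * Complex.I *
        ((H (φ γ) τ).im : ℂ))‖ = 1) ∧
    -- `α_φ` is a semicharacter for `H_φ`
    (∀ γ₁ ∈ Γ, ∀ γ₂ ∈ Γ, ∀ n : ℤ, (H (φ γ₁) (φ γ₂)).im = (n : ℝ) →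
      α (φ (γ₁ + γ₂)) * Complex.exp (2 * (Real.pi : ℂ) * Complex.I *
          ((H (φ (γ₁ + γ₂)) τ).im : ℂ)) =
        (α (φ γ₁) * Complex.exp (2 * (Real.pi : ℂ) * Complex.I *
          ((H (φ γ₁) τ).im : ℂ))) *
        (α (φ γ₂) * Complex.exp (2 * (Real.pi : ℂ) * Complex.I *
          ((H (φ γ₂) τ).im : ℂ))) * (-1 : ℂ) ^ n) := by
  have Hadd1 : ∀ w₁ w₂ w, H (w₁ + w₂) w = H w₁ w + H w₂ w := by
    intro w₁ w₂ w
    rw [Hconj w (w₁ + w₂), Hadd, map_add, ← Hconj, ← Hconj]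
  refine ⟨?_, ?_, ?_, ?_, ?_, ?_⟩
  · intro w w₁ w₂; rw [map_add, Hadd]
  · intro c w w'; rw [map_smul, Hsmul]
  · intro w w'; exact Hconj _ _
  · intro γ hγ γ' hγ'; exact Hint _ (hφΓ γ hγ) _ (hφΓ γ' hγ')
  · intro γ hγ
    rw [norm_mul, hα1 _ (hφΓ γ hγ)]
    have : (2 * (Real.pi : ℂ) * Complex.I * ((H (φ γ) τ).im : ℂ)) =
        ((2 * Real.pi * (H (φ γ) τ).im : ℝ) : ℂ) * Complex.I := by
      push_cast; ring
    rw [this, Complex.norm_exp_ofReal_mul_I, one_mul]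
  · intro γ₁ hγ₁ γ₂ hγ₂ n hn
    have h1 := hα2 _ (hφΓ γ₁ hγ₁) _ (hφΓ γ₂ hγ₂) n hn
    rw [map_add] at *
    rw [h1, Hadd1]
    rw [Complex.add_im]
    push_cast
    rw [mul_add, Complex.exp_add]
    ring
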